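/- Let M be an additive abelian group, let B be a commutative ring with an M-grading B = ⊕_{m∈M} B_m, and let I ⊆ B be a homogeneous ideal with I_m = B_m for all m ≠ 0 and such that (B₀, I₀) is a henselian pair, where I₀ := I ∩ B₀. Let E and F be finitely generated M-graded B-modules that are projective as B-modules. Then every B-linear map w : E/IE → F/IF which, for every m ∈ M, maps the image of E_m in E/IE into the image of F_m in F/IF, lifts to a graded B-linear map u : E → F inducing w on the quotients; moreover, if w is bijective, then every such lift u is bijective. -/

import Mathlib

open DirectSum

section aux

variable {M : Type*} [AddCommGroup M] [DecidableEq M]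
  {B : Type*} [CommRing B] (𝒜 : M → AddSubgroup B) [GradedRing 𝒜]
  {N : Type*} [AddCommGroup N] [Module B N]
  (𝒩 : M → AddSubgroup N) [SetLike.GradedSMul 𝒜 𝒩] [DirectSum.Decomposition 𝒩]

theorem GHL.decompose_smul_homog {i : M} {b : B} (hb : b ∈ 𝒜 i) (y : N) (k : M) :
    (decompose 𝒩 (b • y) (i + k) : N) = b • (decompose 𝒩 y k : N) := by
  refine DirectSum.Decomposition.inductionOn 𝒩
    (motive := fun y => (decompose 𝒩 (b • y) (i + k) : N) = b • (decompose 𝒩 y k : N)) ?_ ?_ ?_ y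
  · simp
  · intro j z
    have hbz : b • (z : N) ∈ 𝒩 (i + j) := by
      have := SetLike.GradedSMul.smul_mem hb z.2
      rwa [vadd_eq_add] at this
    by_cases hjk : j = k
    · subst hjk
      rw [decompose_of_mem_same 𝒩 hbz, decompose_of_mem_same 𝒩 z.2]
    · rw [decompose_of_mem_ne 𝒩 hbz (fun h => hjk (add_left_cancel h)),
        decompose_of_mem_ne 𝒩 z.2 hjk, smul_zero]
  · intro y₁ y₂ h₁ h₂
    rw [smul_add, decompose_add, decompose_add, DirectSum.add_apply, DirectSum.add_apply,
      AddSubgroup.coe_add, AddSubgroup.coe_add, h₁, h₂, smul_add]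

theorem GHL.decompose_smul_zero_deg (r : B) {k : M} {n : N} (hn : n ∈ 𝒩 k) :
    (decompose 𝒩 (r • n) k : N) = (decompose 𝒜 r 0 : B) • n := by
  refine DirectSum.Decomposition.inductionOn 𝒜
    (motive := fun r => (decompose 𝒩 (r • n) k : N) = (decompose 𝒜 r 0 : B) • n) ?_ ?_ ?_ r
  · simp
  · intro i b
    have hbn : (b : B) • n ∈ 𝒩 (i + k) := by
      have := SetLike.GradedSMul.smul_mem b.2 hn
      rwa [vadd_eq_add] at this
    by_cases hi : i = 0
    · subst hi
      rw [decompose_of_mem_same 𝒜 b.2]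
      rw [zero_add] at hbn
      rw [decompose_of_mem_same 𝒩 hbn]
    · rw [decompose_of_mem_ne 𝒜 b.2 hi,
        decompose_of_mem_ne 𝒩 hbn (fun h => hi (by
          have h' : i + k = 0 + k := by rw [zero_add]; exact h
          exact add_right_cancel h')), zero_smul]
  · intro b₁ b₂ h₁ h₂
    rw [add_smul, decompose_add, decompose_add, DirectSum.add_apply, DirectSum.add_apply,
      AddSubgroup.coe_add, AddSubgroup.coe_add, h₁, h₂, add_smul]

theorem GHL.decompose_mem_smul_top (I : Ideal B) (hI : Ideal.IsHomogeneous 𝒜 I)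
    {z : N} (hz : z ∈ I • (⊤ : Submodule B N)) (m : M) :
    (decompose 𝒩 z m : N) ∈ I • (⊤ : Submodule B N) := by
  classical
  have key : ∀ (i : M) (b : B), b ∈ 𝒜 i → b ∈ I → ∀ (n : N) (m : M),
      (decompose 𝒩 (b • n) m : N) ∈ I • (⊤ : Submodule B N) := by
    intro i b hbi hbI n
    refine DirectSum.Decomposition.inductionOn 𝒩
      (motive := fun n => ∀ m, (decompose 𝒩 (b • n) m : N) ∈ I • (⊤ : Submodule B N)) ?_ ?_ ?_ n
    · intro m; simp
    · intro j z m
      have hbz : b • (z : N) ∈ 𝒩 (i + j) := by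
        have := SetLike.GradedSMul.smul_mem hbi z.2
        rwa [vadd_eq_add] at this
      by_cases h : i + j = m
      · subst h
        rw [decompose_of_mem_same 𝒩 hbz]
        exact Submodule.smul_mem_smul hbI Submodule.mem_top
      · rw [decompose_of_mem_ne 𝒩 hbz h]
        exact zero_mem _
    · intro a c ha hc m
      rw [smul_add, decompose_add, DirectSum.add_apply, AddSubgroup.coe_add]
      exact add_mem (ha m) (hc m)
  have main : ∀ m, (decompose 𝒩 z m : N) ∈ I • (⊤ : Submodule B N) := by
    refine Submodule.smul_induction_on hz ?_ ?_
    · intro r hr n _ m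
      have hr' : r • n = ∑ i ∈ (decompose 𝒜 r).support, (decompose 𝒜 r i : B) • n := by
        rw [← Finset.sum_smul, DirectSum.sum_support_decompose]
      rw [hr', decompose_sum, DFinsupp.finset_sum_apply, AddSubmonoidClass.coe_finset_sum]
      exact Submodule.sum_mem _ fun i _ =>
        key i _ (SetLike.coe_mem _) (hI i hr) n m
    · intro x y hx hy m
      rw [decompose_add, DirectSum.add_apply, AddSubgroup.coe_add]
      exact add_mem (hx m) (hy m)
  exact main m

theorem GHL.decompose_map {E : Type*} [AddCommGroup E] [Module B E]
    (ℰ : M → AddSubgroup E) [DirectSum.Decomposition ℰ]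
    {F : Type*} [AddCommGroup F] [Module B F]
    (ℱ : M → AddSubgroup F) [DirectSum.Decomposition ℱ]
    (u : E →ₗ[B] F) (hu : ∀ m : M, ∀ x ∈ ℰ m, u x ∈ ℱ m) (x : E) (m : M) :
    (decompose ℱ (u x) m : F) = u (decompose ℰ x m) := by
  refine DirectSum.Decomposition.inductionOn ℰ
    (motive := fun x => (decompose ℱ (u x) m : F) = u (decompose ℰ x m)) ?_ ?_ ?_ x
  · simp
  · intro k z
    have huz : u (z : E) ∈ ℱ k := hu k z z.2
    by_cases hk : k = m
    · subst hk
      rw [decompose_of_mem_same ℱ huz, decompose_of_mem_same ℰ z.2]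
    · rw [decompose_of_mem_ne ℱ huz hk, decompose_of_mem_ne ℰ z.2 hk, map_zero]
  · intro x₁ x₂ h₁ h₂
    rw [map_add, decompose_add, decompose_add, DirectSum.add_apply, DirectSum.add_apply,
      AddSubgroup.coe_add, AddSubgroup.coe_add, h₁, h₂, map_add]

end aux

set_option maxHeartbeats 1000000 in
set_option synthInstance.maxHeartbeats 200000 in
/-- Lifting along a henselian pair for graded projective modules: let `B` be a
commutative ring graded by an abelian group `M`, let `I ⊆ B` be a homogeneous ideal
with `I_m = B_m` for all `m ≠ 0` and such that `(B₀, I₀)` is a henselian pair, where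
`B₀ = 𝒜 0` and `I₀ = I ∩ B₀`. Let `E` and `F` be finitely generated `M`-graded
`B`-modules that are projective as `B`-modules. Then every `B`-linear map
`w : E/IE → F/IF` mapping the image of `E_m` into the image of `F_m` for all `m`
lifts to a graded `B`-linear map `u : E → F` inducing `w`; moreover, if `w` is
bijective then every such lift `u` is bijective. -/
theorem graded_henselian_lifting
    {M : Type*} [AddCommGroup M] [DecidableEq M]
    {B : Type*} [CommRing B] (𝒜 : M → AddSubgroup B) [GradedRing 𝒜]
    (I : Ideal B) (hI : Ideal.IsHomogeneous 𝒜 I)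
    (hIm : ∀ m : M, m ≠ 0 → ∀ x : B, x ∈ 𝒜 m → x ∈ I)
    (hHens : HenselianRing (𝒜 0)
      (Ideal.comap ((SetLike.GradeZero.subring 𝒜).subtype : (𝒜 0) →+* B) I))
    {E : Type*} [AddCommGroup E] [Module B E]
    (ℰ : M → AddSubgroup E) [SetLike.GradedSMul 𝒜 ℰ] [DirectSum.Decomposition ℰ]
    [Module.Finite B E] [Module.Projective B E]
    {F : Type*} [AddCommGroup F] [Module B F]
    (ℱ : M → AddSubgroup F) [SetLike.GradedSMul 𝒜 ℱ] [DirectSum.Decomposition ℱ]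
    [Module.Finite B F] [Module.Projective B F]
    (w : (E ⧸ (I • (⊤ : Submodule B E))) →ₗ[B] (F ⧸ (I • (⊤ : Submodule B F))))
    (hw : ∀ m : M, ∀ x ∈ ℰ m, w (Submodule.Quotient.mk x) ∈
      Submodule.Quotient.mk '' (ℱ m : Set F)) :
    (∃ u : E →ₗ[B] F, (∀ m : M, ∀ x ∈ ℰ m, u x ∈ ℱ m) ∧
        ∀ x : E, w (Submodule.Quotient.mk x) = Submodule.Quotient.mk (u x)) ∧
      (Function.Bijective w →
        ∀ u : E →ₗ[B] F, (∀ m : M, ∀ x ∈ ℰ m, u x ∈ ℱ m) →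
          (∀ x : E, w (Submodule.Quotient.mk x) = Submodule.Quotient.mk (u x)) →
          Function.Bijective u) := by
  classical
  -- A homogeneous `1`-unit of `B₀` is a unit of `B`, by henselianity.
  have unit_of : ∀ r : B, r - 1 ∈ I → ∃ s : B, s * (decompose 𝒜 r 0 : B) = 1 := by
    intro r hr
    set ρ : 𝒜 0 := decompose 𝒜 r 0 with hρdef
    have h1 : (decompose 𝒜 (1 : B) 0 : B) = 1 :=
      decompose_of_mem_same 𝒜 (SetLike.one_mem_graded 𝒜)
    have hρI : (ρ : B) - 1 ∈ I := by
      have := hI 0 hr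
      rwa [decompose_sub, DirectSum.sub_apply, AddSubgroup.coe_sub, h1] at this
    have hρjac : ρ - 1 ∈ Ideal.jacobson (⊥ : Ideal (𝒜 0)) := by
      refine hHens.jac ?_
      show ((ρ - 1 : 𝒜 0) : B) ∈ I
      simpa using hρI
    have hunit : IsUnit (ρ : B) :=
      (Ideal.isUnit_of_sub_one_mem_jacobson_bot ρ hρjac).map
        (SetLike.GradeZero.subring 𝒜).subtype
    obtain ⟨s, hs⟩ := hunit.exists_left_inv
    exact ⟨s, hs⟩
  constructor
  · -- Existence of a graded lift.
    obtain ⟨v, hv⟩ := Module.projective_lifting_property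
      (Submodule.mkQ (I • (⊤ : Submodule B F)))
      (w ∘ₗ Submodule.mkQ (I • (⊤ : Submodule B E)))
      (Submodule.mkQ_surjective _)
    set U : E →+ F :=
      (DirectSum.coeAddMonoidHom ℱ).comp
        ((DirectSum.toAddMonoid fun m =>
            (DirectSum.of (fun m => ℱ m) m).comp
              ((AddMonoidHom.mk' (fun y : E => decompose ℱ (v y) m)
                (fun a b => by
                  show decompose ℱ (v (a + b)) m = decompose ℱ (v a) m + decompose ℱ (v b) m
                  rw [map_add, decompose_add, DirectSum.add_apply])).comp
                (ℰ m).subtype)).comp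
          (decomposeAddEquiv ℰ).toAddMonoidHom) with hUdef
    have hUeval : ∀ (m : M) (x : E), x ∈ ℰ m → U x = (decompose ℱ (v x) m : F) := by
      intro m x hx
      rw [hUdef]
      simp only [AddMonoidHom.comp_apply, AddEquiv.coe_toAddMonoidHom,
        decomposeAddEquiv_apply]
      rw [decompose_of_mem ℰ hx, DirectSum.toAddMonoid_of]
      simp only [AddMonoidHom.comp_apply, DirectSum.coeAddMonoidHom_of]
      rfl
    have hUsmul : ∀ (b : B) (x : E), U (b • x) = b • U x := by
      intro b x
      refine DirectSum.Decomposition.inductionOn ℰ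
        (motive := fun x => U (b • x) = b • U x) ?_ ?_ ?_ x
      · simp
      · intro k z
        refine DirectSum.Decomposition.inductionOn 𝒜
          (motive := fun b => U (b • (z : E)) = b • U (z : E)) ?_ ?_ ?_ b
        · simp
        · intro i c
          have hcz : (c : B) • (z : E) ∈ ℰ (i + k) := by
            have := SetLike.GradedSMul.smul_mem c.2 z.2
            rwa [vadd_eq_add] at this
          rw [hUeval _ _ hcz, hUeval _ _ z.2, LinearMap.map_smul,
            GHL.decompose_smul_homog 𝒜 ℱ c.2 (v (z : E)) k]
        · intro b₁ b₂ h₁ h₂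
          rw [add_smul, map_add, h₁, h₂, add_smul]
      · intro x₁ x₂ h₁ h₂
        rw [smul_add, map_add, h₁, h₂, map_add, smul_add]
    set u : E →ₗ[B] F :=
      { toFun := U, map_add' := U.map_add, map_smul' := fun b x => hUsmul b x } with hudef
    have huapp : ∀ x : E, u x = U x := fun _ => rfl
    have hugr : ∀ m : M, ∀ x ∈ ℰ m, u x ∈ ℱ m := by
      intro m x hx
      rw [huapp, hUeval m x hx]
      exact SetLike.coe_mem _
    refine ⟨u, hugr, ?_⟩
    refine DirectSum.Decomposition.inductionOn ℰ
      (motive := fun x => w (Submodule.Quotient.mk x) = Submodule.Quotient.mk (u x)) ?_ ?_ ?_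
    · have : (Submodule.Quotient.mk (0 : E) : E ⧸ (I • (⊤ : Submodule B E))) = 0 := rfl
      simp [this]
    · intro m z
      obtain ⟨y, hy, hyeq⟩ := hw m z z.2
      have hvz : (Submodule.Quotient.mk (v (z : E)) :
          F ⧸ (I • (⊤ : Submodule B F))) = w (Submodule.Quotient.mk (z : E)) := by
        have := LinearMap.congr_fun hv (z : E)
        simpa using this
      have hmem : v (z : E) - y ∈ I • (⊤ : Submodule B F) := by
        rw [← Submodule.Quotient.eq]
        rw [hvz, ← hyeq]
      have h2 := GHL.decompose_mem_smul_top 𝒜 ℱ I hI hmem m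
      have h3 : (decompose ℱ (v (z : E) - y) m : F) = u (z : E) - y := by
        rw [decompose_sub, DirectSum.sub_apply, AddSubgroup.coe_sub,
          decompose_of_mem_same ℱ hy, huapp, hUeval m _ z.2]
      rw [h3] at h2
      calc w (Submodule.Quotient.mk (z : E)) = Submodule.Quotient.mk y := hyeq.symm
        _ = Submodule.Quotient.mk (u (z : E)) := ((Submodule.Quotient.eq _).mpr h2).symm
    · intro x₁ x₂ h₁ h₂
      rw [Submodule.Quotient.mk_add, map_add, h₁, h₂, map_add,
        Submodule.Quotient.mk_add]
  · -- Bijectivity of any graded lift.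
    intro hbij u hu hc
    have hgr : ∀ (x : E) (m : M), (decompose ℱ (u x) m : F) = u (decompose ℰ x m) :=
      fun x m => GHL.decompose_map ℰ ℱ u hu x m
    -- Surjectivity
    have hsurj : Function.Surjective u := by
      set R : Submodule B F := LinearMap.range u with hRdef
      have hRgr : ∀ (y : F) (m : M), y ∈ R → (decompose ℱ y m : F) ∈ R := by
        rintro y m ⟨x, rfl⟩
        rw [hgr]
        exact ⟨_, rfl⟩
      have hRtop : ∀ y : F, ∃ x : E, y - u x ∈ I • (⊤ : Submodule B F) := by
        intro y
        obtain ⟨q, hq⟩ := hbij.2 (Submodule.Quotient.mk y)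
        obtain ⟨x, rfl⟩ := Submodule.mkQ_surjective _ q
        refine ⟨x, ?_⟩
        rw [← Submodule.Quotient.eq]
        have : w (Submodule.Quotient.mk x) = Submodule.Quotient.mk (u x) := hc x
        rw [← this]
        simpa using hq.symm
      haveI : Module.Finite B (F ⧸ R) :=
        Module.Finite.of_surjective R.mkQ (Submodule.mkQ_surjective R)
      have hQle : (⊤ : Submodule B (F ⧸ R)) ≤ I • (⊤ : Submodule B (F ⧸ R)) := by
        intro q _
        obtain ⟨y, rfl⟩ := Submodule.mkQ_surjective R q
        obtain ⟨x, hx⟩ := hRtop y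
        have h0 : R.mkQ (u x) = 0 := by
          rw [← LinearMap.mem_ker, Submodule.ker_mkQ]
          exact ⟨x, rfl⟩
        have h1 : R.mkQ y = R.mkQ (y - u x) := by rw [map_sub, h0, sub_zero]
        have h2 : R.mkQ (y - u x) ∈ (I • (⊤ : Submodule B F)).map R.mkQ :=
          Submodule.mem_map_of_mem hx
        rw [Submodule.map_smul''] at h2
        rw [h1]
        exact (smul_mono_right I (le_top : _ ≤ (⊤ : Submodule B (F ⧸ R)))) h2
      obtain ⟨r, hr1, hr0⟩ :=
        Submodule.exists_sub_one_mem_and_smul_eq_zero_of_fg_of_le_smul I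
          (⊤ : Submodule B (F ⧸ R)) (Module.finite_def.mp ‹_›) hQle
      have hrR : ∀ y : F, r • y ∈ R := by
        intro y
        have := hr0 (R.mkQ y) Submodule.mem_top
        rw [← map_smul, ← LinearMap.mem_ker, Submodule.ker_mkQ] at this
        exact this
      have hρR : ∀ y : F, (decompose 𝒜 r 0 : B) • y ∈ R := by
        refine DirectSum.Decomposition.inductionOn ℱ
          (motive := fun y => (decompose 𝒜 r 0 : B) • y ∈ R) ?_ ?_ ?_
        · show (decompose 𝒜 r 0 : B) • (0 : F) ∈ R
          rw [smul_zero]; exact zero_mem _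
        · intro k z
          rw [← GHL.decompose_smul_zero_deg 𝒜 ℱ r z.2]
          exact hRgr _ _ (hrR (z : F))
        · intro y₁ y₂ h₁ h₂
          rw [smul_add]; exact add_mem h₁ h₂
      obtain ⟨s, hs⟩ := unit_of r hr1
      intro y
      have : y ∈ R := by
        have : (s * (decompose 𝒜 r 0 : B)) • y ∈ R := by
          rw [mul_smul]
          exact R.smul_mem s (hρR y)
        rwa [hs, one_smul] at this
      exact this
    -- Injectivity
    obtain ⟨sec, hsec⟩ := Module.projective_lifting_property u LinearMap.id hsurj
    set p : E →ₗ[B] E := LinearMap.id - sec ∘ₗ u with hpdef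
    set K : Submodule B E := LinearMap.ker u with hKdef
    have hup : ∀ x : E, u (p x) = 0 := by
      intro x
      have h1 : u (sec (u x)) = u x := LinearMap.congr_fun hsec (u x)
      simp [hpdef, map_sub, h1]
    have hpK : ∀ x ∈ K, p x = x := by
      intro x hx
      have hx0 : u x = 0 := hx
      simp [hpdef, hx0]
    have hKr : K = LinearMap.range p := by
      apply le_antisymm
      · intro x hx
        exact ⟨x, hpK x hx⟩
      · rintro _ ⟨x, rfl⟩
        exact hup x
    have hKgr : ∀ x ∈ K, ∀ m : M, (decompose ℰ x m : E) ∈ K := by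
      intro x hx m
      have hx0 : u x = 0 := hx
      show u _ = 0
      rw [← hgr, hx0, decompose_zero, DirectSum.zero_apply, ZeroMemClass.coe_zero]
    have hKfg : K.FG := by
      rw [hKr, LinearMap.range_eq_map]
      exact (Module.finite_def.mp ‹Module.Finite B E›).map p
    have hKI : K ≤ I • K := by
      intro x hx
      have hxq : Submodule.Quotient.mk x = (0 : E ⧸ (I • (⊤ : Submodule B E))) := by
        apply hbij.1
        rw [hc x, map_zero]
        have hx0 : u x = 0 := hx
        rw [hx0]
        rfl
      have hxI : x ∈ I • (⊤ : Submodule B E) := (Submodule.Quotient.mk_eq_zero _).mp hxq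
      have h2 : p x ∈ (I • (⊤ : Submodule B E)).map p := Submodule.mem_map_of_mem hxI
      rw [Submodule.map_smul''] at h2
      rw [hpK x hx] at h2
      rw [hKr, LinearMap.range_eq_map]
      exact h2
    obtain ⟨r, hr1, hr0⟩ :=
      Submodule.exists_sub_one_mem_and_smul_eq_zero_of_fg_of_le_smul I K hKfg hKI
    have hkill : ∀ x ∈ K, (decompose 𝒜 r 0 : B) • x = 0 := by
      intro x hx
      have hcomp : ∀ k : M, (decompose 𝒜 r 0 : B) • (decompose ℰ x k : E) = 0 := by
        intro k
        rw [← GHL.decompose_smul_zero_deg 𝒜 ℰ r (SetLike.coe_mem _),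
          hr0 _ (hKgr x hx k), decompose_zero, DirectSum.zero_apply, ZeroMemClass.coe_zero]
      calc (decompose 𝒜 r 0 : B) • x
          = (decompose 𝒜 r 0 : B) •
            ∑ k ∈ (decompose ℰ x).support, (decompose ℰ x k : E) := by
            rw [DirectSum.sum_support_decompose]
        _ = ∑ k ∈ (decompose ℰ x).support,
            (decompose 𝒜 r 0 : B) • (decompose ℰ x k : E) := Finset.smul_sum
        _ = 0 := Finset.sum_eq_zero fun k _ => hcomp k
    have hinj : Function.Injective u := by
      rw [← LinearMap.ker_eq_bot]
      rw [eq_bot_iff]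
      intro x hx
      obtain ⟨s, hs⟩ := unit_of r hr1
      have : (s * (decompose 𝒜 r 0 : B)) • x = 0 := by
        rw [mul_smul, hkill x hx, smul_zero]
      rw [hs, one_smul] at this
      simp [this]
    exact ⟨hinj, hsurj⟩
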